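/- Let N ≥ 2, X ⊂ ℝ² a nonempty compact convex centrally symmetric set (X = −X), θ_i = (i−1)π/N, and X_0^{(N)} the unique zonotope ⊕ α_i S_{θ_i} with H_{X_0^{(N)}}(θ_i) = H_X(θ_i) for all i. Then d_H(X, X_0^{(N)}) ≤ (6 + 2√2)·sin(π/(2N))·diam(X), where diam(X) = sup_θ H_X(θ); in particular d_H(X, X_0^{(N)}) → 0 as N → ∞. -/

import Mathlib

open Real Pointwise MeasureTheory

/-- Points of the Euclidean plane. -/
abbrev Pt := EuclideanSpace ℝ (Fin 2)

noncomputable def mk2 (a b : ℝ) : Pt := (WithLp.equiv 2 (Fin 2 → ℝ)).symm ![a, b]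

/-- Support function `f_X(x) = sup_{s ∈ X} ⟨x, s⟩`. -/
noncomputable def fS (X : Set Pt) (x : Pt) : ℝ :=
  sSup ((fun s => (inner ℝ x s : ℝ)) '' X)

/-- Direction vector `(-sin θ, cos θ)`. -/
noncomputable def dir (θ : ℝ) : Pt := mk2 (-Real.sin θ) (Real.cos θ)

/-- Support function in direction θ. -/
noncomputable def hF (X : Set Pt) (θ : ℝ) : ℝ := fS X (dir θ)

/-- The Feret diameter `H_X(θ) = h_X(θ) + h_{-X}(θ)`. -/
noncomputable def feret (X : Set Pt) (θ : ℝ) : ℝ := hF X θ + hF (-X) θ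

/-- The segment with endpoints `±½(cos θ, sin θ)`. -/
noncomputable def seg (θ : ℝ) : Set Pt :=
  segment ℝ (-mk2 (Real.cos θ / 2) (Real.sin θ / 2)) (mk2 (Real.cos θ / 2) (Real.sin θ / 2))

open scoped RealInnerProductSpace

/-! ### Auxiliary lemmas -/

lemma mk2_apply_zero (a b : ℝ) : mk2 a b 0 = a := rfl
lemma mk2_apply_one (a b : ℝ) : mk2 a b 1 = b := rfl

lemma pt_ext {x y : Pt} (h0 : x 0 = y 0) (h1 : x 1 = y 1) : x = y := by
  apply PiLp.ext; intro i; fin_cases i <;> assumption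

lemma inner_pt (x y : Pt) : ⟪x, y⟫ = x 0 * y 0 + x 1 * y 1 := by
  simp [PiLp.inner_apply, Fin.sum_univ_two, RCLike.inner_apply, mul_comm]

lemma norm_pt (x : Pt) : ‖x‖ = Real.sqrt ((x 0)^2 + (x 1)^2) := by
  rw [EuclideanSpace.norm_eq]
  simp [Fin.sum_univ_two, Real.norm_eq_abs, sq_abs]

lemma fS_bddAbove {Y : Set Pt} {R : ℝ} (hY : Y ⊆ Metric.closedBall 0 R) (u : Pt) :
    BddAbove ((fun s => ⟪u, s⟫) '' Y) := by
  refine ⟨‖u‖ * R, ?_⟩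
  rintro t ⟨s, hs, rfl⟩
  have h1 : ‖s‖ ≤ R := by simpa [mem_closedBall_zero_iff] using hY hs
  calc ⟪u, s⟫ ≤ ‖u‖ * ‖s‖ := real_inner_le_norm u s
    _ ≤ ‖u‖ * R := mul_le_mul_of_nonneg_left h1 (norm_nonneg u)

lemma le_fS {Y : Set Pt} {R : ℝ} (hY : Y ⊆ Metric.closedBall 0 R) {s : Pt} (hs : s ∈ Y)
    (u : Pt) : ⟪u, s⟫ ≤ fS Y u :=
  le_csSup (fS_bddAbove hY u) ⟨s, hs, rfl⟩

lemma fS_le {Y : Set Pt} (hne : Y.Nonempty) {u : Pt} {c : ℝ}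
    (h : ∀ s ∈ Y, ⟪u, s⟫ ≤ c) : fS Y u ≤ c :=
  csSup_le (hne.image _) (by rintro t ⟨s, hs, rfl⟩; exact h s hs)

lemma abs_fS_sub {Y : Set Pt} {R : ℝ} (hne : Y.Nonempty) (hY : Y ⊆ Metric.closedBall 0 R)
    (u v : Pt) : |fS Y u - fS Y v| ≤ R * ‖u - v‖ := by
  have key : ∀ w z : Pt, fS Y w - fS Y z ≤ R * ‖w - z‖ := by
    intro w z
    have h1 : fS Y w ≤ fS Y z + R * ‖w - z‖ := by
      apply fS_le hne
      intro s hs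
      have h2 : ‖s‖ ≤ R := by simpa [mem_closedBall_zero_iff] using hY hs
      have h3 : ⟪w - z, s⟫ ≤ ‖w - z‖ * ‖s‖ := real_inner_le_norm _ _
      have h4 : ⟪z, s⟫ ≤ fS Y z := le_fS hY hs z
      have h5 : ⟪w - z, s⟫ = ⟪w, s⟫ - ⟪z, s⟫ := inner_sub_left w z s
      nlinarith [norm_nonneg (w - z)]
    linarith
  rw [abs_sub_le_iff]
  exact ⟨key u v, by simpa [norm_sub_rev] using key v u⟩

lemma fS_neg_set (Y : Set Pt) (u : Pt) : fS (-Y) u = fS Y (-u) := by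
  unfold fS
  congr 1
  ext t
  constructor
  · rintro ⟨s, hs, rfl⟩
    exact ⟨-s, Set.mem_neg.mp hs, by simp⟩
  · rintro ⟨s, hs, rfl⟩
    refine ⟨-s, by simpa [Set.mem_neg], by simp⟩

lemma fS_symm {Y : Set Pt} (hsym : Y = -Y) (u : Pt) : fS Y (-u) = fS Y u := by
  conv_rhs => rw [hsym]
  rw [fS_neg_set]

lemma feret_symm {Y : Set Pt} (hsym : Y = -Y) (θ : ℝ) : feret Y θ = 2 * hF Y θ := by
  rw [feret, hF, hF, fS_neg_set, fS_symm hsym]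
  ring

lemma norm_dir (θ : ℝ) : ‖dir θ‖ = 1 := by
  rw [dir, norm_pt, mk2_apply_zero, mk2_apply_one,
    show (-Real.sin θ)^2 + (Real.cos θ)^2 = 1 by nlinarith [Real.sin_sq_add_cos_sq θ]]
  exact Real.sqrt_one

lemma abs_sin_sub_sin (a b : ℝ) : |Real.sin a - Real.sin b| ≤ |a - b| := by
  rw [Real.sin_sub_sin]
  have h1 : |Real.sin ((a - b)/2)| ≤ |(a-b)/2| := Real.abs_sin_le_abs
  have h2 : |Real.cos ((a + b)/2)| ≤ 1 := Real.abs_cos_le_one _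
  rw [abs_mul, abs_mul, abs_two]
  have h3 : |(a-b)/2| = |a-b|/2 := by rw [abs_div]; norm_num
  nlinarith [abs_nonneg (Real.sin ((a-b)/2)), abs_nonneg (a - b)]

lemma abs_cos_sub_cos (a b : ℝ) : |Real.cos a - Real.cos b| ≤ |a - b| := by
  rw [Real.cos_sub_cos]
  have h1 : |Real.sin ((a - b)/2)| ≤ |(a-b)/2| := Real.abs_sin_le_abs
  have h2 : |Real.sin ((a + b)/2)| ≤ 1 := Real.abs_sin_le_one _
  rw [abs_mul, abs_mul]
  have h3 : |(a-b)/2| = |a-b|/2 := by rw [abs_div]; norm_num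
  have h4 : |(-2 : ℝ)| = 2 := by norm_num
  rw [h4]
  nlinarith [abs_nonneg (Real.sin ((a-b)/2)), abs_nonneg (a - b)]

lemma dir_sub_le (θ φ : ℝ) : ‖dir θ - dir φ‖ ≤ Real.sqrt 2 * |θ - φ| := by
  have h0 : (dir θ - dir φ) 0 = -Real.sin θ - -Real.sin φ := rfl
  have h1 : (dir θ - dir φ) 1 = Real.cos θ - Real.cos φ := rfl
  rw [norm_pt, h0, h1]
  have hs : |(-Real.sin θ) - -Real.sin φ| ≤ |θ - φ| := by
    have := abs_sin_sub_sin θ φ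
    rw [show (-Real.sin θ) - -Real.sin φ = -(Real.sin θ - Real.sin φ) by ring, abs_neg]
    exact this
  have hc : |Real.cos θ - Real.cos φ| ≤ |θ - φ| := abs_cos_sub_cos θ φ
  have key : ((-Real.sin θ) - -Real.sin φ)^2 + (Real.cos θ - Real.cos φ)^2
      ≤ 2 * |θ - φ|^2 := by
    nlinarith [sq_abs ((-Real.sin θ) - -Real.sin φ), sq_abs (Real.cos θ - Real.cos φ),
      abs_nonneg ((-Real.sin θ) - -Real.sin φ), abs_nonneg (Real.cos θ - Real.cos φ),
      abs_nonneg (θ - φ)]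
  calc Real.sqrt (((-Real.sin θ) - -Real.sin φ)^2 + (Real.cos θ - Real.cos φ)^2)
      ≤ Real.sqrt (2 * |θ - φ|^2) := Real.sqrt_le_sqrt key
    _ = Real.sqrt 2 * |θ - φ| := by
        rw [Real.sqrt_mul (by norm_num), Real.sqrt_sq_eq_abs, abs_abs]

lemma dir_add_pi (θ : ℝ) : dir (θ + π) = -dir θ := by
  apply pt_ext
  · show -Real.sin (θ + π) = -(dir θ 0)
    rw [Real.sin_add_pi]
    rfl
  · show Real.cos (θ + π) = -(dir θ 1)
    rw [Real.cos_add_pi]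
    rfl

lemma hF_add_pi {Y : Set Pt} (hsym : Y = -Y) (θ : ℝ) : hF Y (θ + π) = hF Y θ := by
  rw [hF, hF, dir_add_pi, fS_symm hsym]

lemma inner_dir_p (θ ψ : ℝ) :
    ⟪dir θ, mk2 (Real.cos ψ / 2) (Real.sin ψ / 2)⟫ = Real.sin (ψ - θ) / 2 := by
  rw [inner_pt, Real.sin_sub]
  show -Real.sin θ * (Real.cos ψ / 2) + Real.cos θ * (Real.sin ψ / 2) = _
  ring

lemma norm_p (ψ : ℝ) : ‖mk2 (Real.cos ψ / 2) (Real.sin ψ / 2)‖ = 1/2 := by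
  rw [norm_pt, mk2_apply_zero, mk2_apply_one,
    show (Real.cos ψ / 2)^2 + (Real.sin ψ / 2)^2 = (1/2)^2 by
      nlinarith [Real.sin_sq_add_cos_sq ψ]]
  rw [Real.sqrt_sq (by norm_num)]

lemma seg_subset_ball (ψ : ℝ) : seg ψ ⊆ Metric.closedBall 0 (1/2) := by
  rw [seg]
  apply (convex_closedBall (0:Pt) (1/2)).segment_subset
  · rw [mem_closedBall_zero_iff, norm_neg, norm_p]
  · rw [mem_closedBall_zero_iff, norm_p]

lemma smul_seg_subset {a : ℝ} (ha : 0 ≤ a) (ψ : ℝ) :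
    a • seg ψ ⊆ Metric.closedBall 0 (a/2) := by
  rintro x ⟨t, ht, rfl⟩
  have h1 : ‖t‖ ≤ 1/2 := by
    simpa [mem_closedBall_zero_iff] using seg_subset_ball ψ ht
  rw [mem_closedBall_zero_iff, norm_smul, Real.norm_eq_abs, abs_of_nonneg ha]
  nlinarith

lemma isCompact_seg (ψ : ℝ) : IsCompact (seg ψ) := by
  rw [seg, segment_eq_image]
  exact isCompact_Icc.image (by fun_prop)

lemma isCompact_smul_seg (a ψ : ℝ) : IsCompact (a • seg ψ) := by
  rw [← Set.image_smul]
  exact (isCompact_seg ψ).image (continuous_const_smul a)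

lemma seg_neg (ψ : ℝ) : -(seg ψ) = seg ψ := by
  set p : Pt := mk2 (Real.cos ψ / 2) (Real.sin ψ / 2)
  have key : ∀ x, x ∈ seg ψ → -x ∈ seg ψ := by
    rintro x ⟨u, v, hu, hv, huv, hx⟩
    refine ⟨v, u, hv, hu, by linarith, ?_⟩
    have : v • (-p) + u • p = -(u • (-p) + v • p) := by
      simp only [smul_neg]; abel
    rw [this, hx]
  ext x
  rw [Set.mem_neg]
  constructor
  · intro hx
    simpa using key _ hx
  · intro hx
    exact key _ hx

lemma sum_sets_subset_closedBall {ι : Type*} (s : Finset ι) (A : ι → Set Pt) (r : ι → ℝ)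
    (h : ∀ i ∈ s, A i ⊆ Metric.closedBall 0 (r i)) :
    (∑ i ∈ s, A i) ⊆ Metric.closedBall 0 (∑ i ∈ s, r i) := by
  classical
  induction s using Finset.induction_on with
  | empty =>
    intro x hx
    simp only [Finset.sum_empty] at hx ⊢
    rw [Set.mem_zero] at hx
    simp [hx]
  | @insert a s ha ih =>
    intro x hx
    rw [Finset.sum_insert ha] at hx
    rw [Finset.sum_insert ha]
    rw [Set.mem_add] at hx
    obtain ⟨y, hy, z, hz, rfl⟩ := hx
    have h1 : ‖y‖ ≤ r a := by
      simpa [mem_closedBall_zero_iff] using h a (Finset.mem_insert_self a s) hy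
    have h2 : ‖z‖ ≤ ∑ i ∈ s, r i := by
      simpa [mem_closedBall_zero_iff] using
        ih (fun i hi => h i (Finset.mem_insert_of_mem hi)) hz
    rw [mem_closedBall_zero_iff]
    calc ‖y + z‖ ≤ ‖y‖ + ‖z‖ := norm_add_le y z
      _ ≤ r a + ∑ i ∈ s, r i := add_le_add h1 h2

lemma isCompact_sum_sets {ι : Type*} (s : Finset ι) (A : ι → Set Pt)
    (h : ∀ i ∈ s, IsCompact (A i)) : IsCompact (∑ i ∈ s, A i) := by
  classical
  induction s using Finset.induction_on with
  | empty =>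
    rw [Finset.sum_empty, ← Set.singleton_zero]
    exact isCompact_singleton
  | @insert a s ha ih =>
    rw [Finset.sum_insert ha]
    exact (h a (Finset.mem_insert_self a s)).add
      (ih (fun i hi => h i (Finset.mem_insert_of_mem hi)))

lemma convex_sum_sets {ι : Type*} (s : Finset ι) (A : ι → Set Pt)
    (h : ∀ i ∈ s, Convex ℝ (A i)) : Convex ℝ (∑ i ∈ s, A i) := by
  classical
  induction s using Finset.induction_on with
  | empty =>
    rw [Finset.sum_empty, ← Set.singleton_zero]
    exact convex_singleton 0
  | @insert a s ha ih =>
    rw [Finset.sum_insert ha]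
    exact (h a (Finset.mem_insert_self a s)).add
      (ih (fun i hi => h i (Finset.mem_insert_of_mem hi)))

lemma neg_sum_sets {ι : Type*} (s : Finset ι) (A : ι → Set Pt) :
    -(∑ i ∈ s, A i) = ∑ i ∈ s, -(A i) := by
  classical
  induction s using Finset.induction_on with
  | empty => simp
  | @insert a s ha ih =>
    rw [Finset.sum_insert ha, Finset.sum_insert ha, neg_add_rev, ih, add_comm]

lemma exists_dir (u : Pt) (hu : ‖u‖ = 1) : ∃ θ : ℝ, dir θ = u := by
  have h1 : (u 0)^2 + (u 1)^2 = 1 := by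
    have h2 : Real.sqrt ((u 0)^2 + (u 1)^2) = 1 := by rw [← norm_pt, hu]
    nlinarith [Real.sq_sqrt (show (0:ℝ) ≤ (u 0)^2+(u 1)^2 by positivity)]
  set z : ℂ := ⟨u 1, -(u 0)⟩ with hzdef
  have hz : ‖z‖ = 1 := by
    rw [Complex.norm_def, Complex.normSq_mk]
    rw [show u 1 * u 1 + -(u 0) * -(u 0) = 1 by nlinarith]
    exact Real.sqrt_one
  have hz0 : z ≠ 0 := by
    intro h
    rw [h] at hz
    simp at hz
  refine ⟨Complex.arg z, ?_⟩
  have hc := Complex.cos_arg hz0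
  have hs := Complex.sin_arg z
  rw [hz, div_one] at hc hs
  apply pt_ext
  · show -Real.sin (Complex.arg z) = u 0
    rw [hs]; show -(z.im) = u 0; rw [hzdef]; simp
  · show Real.cos (Complex.arg z) = u 1
    rw [hc]

lemma infDist_le_of_fS {Y : Set Pt} (hYc : IsCompact Y) (hYconv : Convex ℝ Y)
    (hYne : Y.Nonempty) {x : Pt} {r : ℝ} (hr : 0 ≤ r)
    (h : ∀ u : Pt, ‖u‖ = 1 → ⟪u, x⟫ ≤ fS Y u + r) : Metric.infDist x Y ≤ r := by
  obtain ⟨y, hyY, hy⟩ := hYc.exists_infDist_eq_dist hYne x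
  obtain ⟨RY, hRY⟩ := hYc.isBounded.subset_closedBall (0 : Pt)
  rw [hy]
  rcases eq_or_ne x y with rfl | hxy
  · simpa using hr
  have hn : ‖x - y‖ ≠ 0 := by simp [sub_eq_zero, hxy]
  have hnpos : 0 < ‖x - y‖ := (norm_nonneg _).lt_of_ne (Ne.symm hn)
  set u : Pt := ‖x - y‖⁻¹ • (x - y) with hu
  have hu1 : ‖u‖ = 1 := by
    rw [hu, norm_smul, Real.norm_eq_abs, abs_of_nonneg (by positivity), inv_mul_cancel₀ hn]
  have hiInf : ‖x - y‖ = ⨅ w : Y, ‖x - w‖ := by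
    have he : (⨅ w : Y, ‖x - w‖) = ⨅ w : Y, dist x w := by
      exact iInf_congr fun w => dist_eq_norm x (w : Pt) ▸ rfl
    rw [he, ← Metric.infDist_eq_iInf, hy, dist_eq_norm]
  have hobtuse : ∀ w ∈ Y, ⟪x - y, w - y⟫ ≤ 0 :=
    (norm_eq_iInf_iff_real_inner_le_zero hYconv hyY).mp hiInf
  have hfS : fS Y u ≤ ⟪u, y⟫ := by
    apply fS_le hYne
    intro w hw
    have h1 : ⟪u, w⟫ - ⟪u, y⟫ = ‖x - y‖⁻¹ * ⟪x - y, w - y⟫ := by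
      rw [hu, real_inner_smul_left, real_inner_smul_left, ← mul_sub, inner_sub_right]
    have h2 : ‖x - y‖⁻¹ * ⟪x - y, w - y⟫ ≤ 0 :=
      mul_nonpos_of_nonneg_of_nonpos (by positivity) (hobtuse w hw)
    linarith
  have hux : ⟪u, x - y⟫ = ‖x - y‖ := by
    rw [hu, real_inner_smul_left, real_inner_self_eq_norm_mul_norm]
    field_simp
  have h2 := h u hu1
  have h3 : ⟪u, x⟫ - ⟪u, y⟫ = ⟪u, x - y⟫ := (inner_sub_right u x y).symm
  rw [dist_eq_norm]
  linarith

set_option maxHeartbeats 2000000 in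
theorem hausdorff_approx0_le (N : ℕ) (hN : 2 ≤ N) (X : Set Pt)
    (hne : X.Nonempty) (hcomp : IsCompact X) (hconv : Convex ℝ X) (hsym : X = -X)
    (α : Fin N → ℝ) (hα : ∀ i, 0 ≤ α i) (X0 : Set Pt)
    (hX0 : X0 = ∑ i : Fin N, α i • seg ((i : ℝ) * π / N))
    (hferet : ∀ i : Fin N, feret X0 ((i : ℝ) * π / N) = feret X ((i : ℝ) * π / N)) :
    Metric.hausdorffDist X X0 ≤
      (6 + 2 * Real.sqrt 2) * Real.sin (π / (2 * N)) * ⨆ θ : ℝ, feret X θ := by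
  have hN0 : (0:ℝ) < N := by exact_mod_cast (by omega : 0 < N)
  set D := ⨆ θ : ℝ, feret X θ with hD
  obtain ⟨R, hXR⟩ := hcomp.isBounded.subset_closedBall (0 : Pt)
  have hferet2 : ∀ θ, feret X θ = 2 * hF X θ := fun θ => feret_symm hsym θ
  have hBdd : BddAbove (Set.range (feret X)) := by
    refine ⟨2 * R, ?_⟩
    rintro _ ⟨θ, rfl⟩
    rw [hferet2]
    have h0 : hF X θ ≤ R := by
      apply fS_le hne
      intro s hs
      have h1 : ‖s‖ ≤ R := by simpa [mem_closedBall_zero_iff] using hXR hs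
      calc ⟪dir θ, s⟫ ≤ ‖dir θ‖ * ‖s‖ := real_inner_le_norm _ _
        _ = ‖s‖ := by rw [norm_dir, one_mul]
        _ ≤ R := h1
    linarith
  have hDle : ∀ θ, feret X θ ≤ D := fun θ => le_ciSup hBdd θ
  have hhF0 : ∀ θ, 0 ≤ hF X θ := by
    intro θ
    obtain ⟨s, hs⟩ := hne
    have h1 := le_fS hXR hs (dir θ)
    have hs' : -s ∈ X := by rw [hsym]; simpa [Set.mem_neg]
    have h2 := le_fS hXR hs' (dir θ)
    rw [inner_neg_right] at h2
    show (0:ℝ) ≤ fS X (dir θ)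
    linarith
  have hD0 : 0 ≤ D := by
    refine le_trans ?_ (hDle 0)
    rw [hferet2 0]
    linarith [hhF0 0]
  have hXsub : X ⊆ Metric.closedBall 0 (D/2) := by
    intro s hs
    rw [mem_closedBall_zero_iff]
    rcases eq_or_ne s 0 with rfl | hs0
    · simp only [norm_zero]; linarith
    · have hsn : (0:ℝ) < ‖s‖ := norm_pos_iff.mpr hs0
      obtain ⟨θ, hθ⟩ := exists_dir (‖s‖⁻¹ • s) (by
        rw [norm_smul, Real.norm_eq_abs, abs_of_nonneg (by positivity),
          inv_mul_cancel₀ hsn.ne'])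
      have h1 : ⟪dir θ, s⟫ ≤ hF X θ := le_fS hXR hs (dir θ)
      have h2 : ⟪dir θ, s⟫ = ‖s‖ := by
        rw [hθ, real_inner_smul_left, real_inner_self_eq_norm_mul_norm]
        field_simp
      have h3 := hDle θ
      rw [hferet2 θ] at h3
      linarith
  -- facts about X0
  have hX0ne : X0.Nonempty := by
    rw [hX0]
    refine ⟨∑ i : Fin N, α i • mk2 (Real.cos ((i:ℝ)*π/N)/2) (Real.sin ((i:ℝ)*π/N)/2), ?_⟩
    apply Set.finset_sum_mem_finset_sum
    intro i _
    exact Set.smul_mem_smul_set (right_mem_segment ℝ _ _)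
  have hX0comp : IsCompact X0 := by
    rw [hX0]; exact isCompact_sum_sets _ _ (fun i _ => isCompact_smul_seg _ _)
  have hX0conv : Convex ℝ X0 := by
    rw [hX0]
    exact convex_sum_sets _ _ (fun i _ => (convex_segment _ _).smul _)
  have hX0sym : X0 = -X0 := by
    rw [hX0, neg_sum_sets]
    refine Finset.sum_congr rfl fun i _ => ?_
    conv_lhs => rw [← seg_neg ((i:ℝ)*π/N)]
    exact Set.smul_set_neg _ _
  set Sα := ∑ i : Fin N, α i with hSαdef
  have hSα0 : 0 ≤ Sα := Finset.sum_nonneg fun i _ => hα i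
  have hX0sub : X0 ⊆ Metric.closedBall 0 (Sα/2) := by
    rw [hX0]
    have h1 := sum_sets_subset_closedBall Finset.univ
      (fun i => α i • seg ((i:ℝ)*π/N)) (fun i => α i / 2)
      (fun i _ => smul_seg_subset (hα i) _)
    have h2 : (∑ i : Fin N, α i / 2) = Sα / 2 := by
      rw [hSαdef, Finset.sum_div]
    rw [h2] at h1
    exact h1
  -- lower bound for support of X0
  have hlow : ∀ θ : ℝ, (∑ i : Fin N, α i * |Real.sin ((i:ℝ)*π/N - θ)|) ≤ feret X0 θ := by
    intro θ
    rw [feret_symm hX0sym]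
    set g : Fin N → Pt := fun i =>
      if 0 ≤ Real.sin ((i:ℝ)*π/N - θ)
      then α i • mk2 (Real.cos ((i:ℝ)*π/N)/2) (Real.sin ((i:ℝ)*π/N)/2)
      else α i • (-mk2 (Real.cos ((i:ℝ)*π/N)/2) (Real.sin ((i:ℝ)*π/N)/2)) with hg
    have hmem : (∑ i : Fin N, g i) ∈ X0 := by
      rw [hX0]
      apply Set.finset_sum_mem_finset_sum
      intro i _
      rw [hg]
      dsimp only
      split_ifs
      · exact Set.smul_mem_smul_set (right_mem_segment ℝ _ _)
      · exact Set.smul_mem_smul_set (left_mem_segment ℝ _ _)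
    have hinner : ∀ i : Fin N, ⟪dir θ, g i⟫ = α i * |Real.sin ((i:ℝ)*π/N - θ)| / 2 := by
      intro i
      rw [hg]
      dsimp only
      split_ifs with hcase
      · rw [real_inner_smul_right, inner_dir_p, abs_of_nonneg hcase]; ring
      · rw [real_inner_smul_right, inner_neg_right, inner_dir_p,
          abs_of_neg (lt_of_not_ge hcase)]; ring
    have h1 : ⟪dir θ, ∑ i : Fin N, g i⟫ ≤ fS X0 (dir θ) := le_fS hX0sub hmem _
    rw [inner_sum] at h1
    have h2 : ∑ i : Fin N, ⟪dir θ, g i⟫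
        = (∑ i : Fin N, α i * |Real.sin ((i:ℝ)*π/N - θ)|)/2 := by
      rw [Finset.sum_div]
      exact Finset.sum_congr rfl fun i _ => by rw [hinner i]
    rw [h2] at h1
    have h3 : hF X0 θ = fS X0 (dir θ) := rfl
    rw [h3]
    linarith
  -- grid equality
  have hgrid : ∀ m : ℕ, m ≤ N → feret X0 ((m:ℝ)*π/N) = feret X ((m:ℝ)*π/N) := by
    intro m hm
    rcases lt_or_eq_of_le hm with h | rfl
    · have h1 := hferet ⟨m, h⟩
      simpa using h1
    · have hNpi : ((m:ℝ))*π/m = 0 + π := by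
        field_simp
        ring
      rw [hNpi, feret_symm hX0sym, feret_symm hsym, hF_add_pi hX0sym, hF_add_pi hsym]
      have h0 := hferet ⟨0, by omega⟩
      rw [feret_symm hX0sym, feret_symm hsym] at h0
      simpa using h0
  -- bound on Sα
  set β : ℕ := N / 2 with hβdef
  have hβlt : β < N := by omega
  set b : ℝ := (β:ℝ) * π / N with hbdef
  have hb1 : π/3 ≤ b := by
    have h1 : (N:ℝ) ≤ 3*(β:ℝ) := by exact_mod_cast (by omega : N ≤ 3 * β)
    rw [hbdef, div_le_div_iff₀ (by norm_num : (0:ℝ) < 3) hN0]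
    nlinarith [pi_pos]
  have hb2 : b ≤ π/2 := by
    have h1 : 2*(β:ℝ) ≤ (N:ℝ) := by exact_mod_cast (by omega : 2 * β ≤ N)
    rw [hbdef, div_le_div_iff₀ hN0 (by norm_num : (0:ℝ) < 2)]
    nlinarith [pi_pos]
  have hsinb : Real.sqrt 3 / 2 ≤ Real.sin b := by
    rw [← Real.sin_pi_div_three]
    exact Real.sin_le_sin_of_le_of_le_pi_div_two (by linarith [pi_pos]) hb2 hb1
  have htri : ∀ x : ℝ, Real.sin b ≤ |Real.sin x| + |Real.sin (x - b)| := by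
    intro x
    have h1 : Real.sin b = Real.sin x * Real.cos (x - b) - Real.cos x * Real.sin (x - b) := by
      have h2 := Real.sin_sub x (x - b)
      simpa using h2
    calc Real.sin b ≤ |Real.sin x * Real.cos (x-b) - Real.cos x * Real.sin (x-b)| :=
          h1 ▸ le_abs_self _
      _ ≤ |Real.sin x * Real.cos (x-b)| + |Real.cos x * Real.sin (x-b)| := abs_sub _ _
      _ ≤ |Real.sin x| + |Real.sin (x-b)| := by
          rw [abs_mul, abs_mul]
          nlinarith [Real.abs_cos_le_one (x-b), Real.abs_cos_le_one x,
            abs_nonneg (Real.sin x), abs_nonneg (Real.sin (x-b))]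
  have hS1 : (∑ i : Fin N, α i * |Real.sin ((i:ℝ)*π/N)|) ≤ D := by
    have h1 := hlow 0
    simp only [sub_zero] at h1
    have h2 : feret X0 0 = feret X 0 := by
      have h3 := hgrid 0 (by omega)
      simpa using h3
    rw [h2] at h1
    exact h1.trans (hDle 0)
  have hS2 : (∑ i : Fin N, α i * |Real.sin ((i:ℝ)*π/N - b)|) ≤ D := by
    have h1 := hlow b
    have h2 : feret X0 b = feret X b := by
      rw [hbdef]
      exact hgrid β (le_of_lt hβlt)
    rw [h2] at h1
    exact h1.trans (hDle b)
  have hSαD : Real.sqrt 3 / 2 * Sα ≤ 2 * D := by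
    have h1 : Real.sqrt 3 / 2 * Sα
        ≤ ∑ i : Fin N, α i * (|Real.sin ((i:ℝ)*π/N)| + |Real.sin ((i:ℝ)*π/N - b)|) := by
      rw [hSαdef, Finset.mul_sum]
      apply Finset.sum_le_sum
      intro i _
      have h2 := hsinb.trans (htri ((i:ℝ)*π/N))
      have h3 := hα i
      nlinarith
    have h4 : (∑ i : Fin N, α i * (|Real.sin ((i:ℝ)*π/N)| + |Real.sin ((i:ℝ)*π/N - b)|))
        = (∑ i : Fin N, α i * |Real.sin ((i:ℝ)*π/N)|)
          + (∑ i : Fin N, α i * |Real.sin ((i:ℝ)*π/N - b)|) := by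
      rw [← Finset.sum_add_distrib]
      exact Finset.sum_congr rfl fun i _ => by ring
    linarith
  -- Lipschitz estimate
  have hlip : ∀ (Y : Set Pt) (RY : ℝ), Y.Nonempty → Y ⊆ Metric.closedBall 0 RY →
      ∀ θ φ : ℝ, |hF Y θ - hF Y φ| ≤ RY * (Real.sqrt 2 * |θ - φ|) := by
    intro Y RY hYne hYsub θ φ
    have hRY0 : 0 ≤ RY := by
      obtain ⟨s, hs⟩ := hYne
      have h1 := hYsub hs
      rw [mem_closedBall_zero_iff] at h1
      linarith [norm_nonneg s]
    calc |hF Y θ - hF Y φ| ≤ RY * ‖dir θ - dir φ‖ := abs_fS_sub hYne hYsub _ _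
      _ ≤ RY * (Real.sqrt 2 * |θ - φ|) :=
          mul_le_mul_of_nonneg_left (dir_sub_le θ φ) hRY0
  set s2N := Real.sin (π/(2*(N:ℝ))) with hs2N
  have hs2N0 : 0 ≤ s2N := by
    rw [hs2N]
    apply Real.sin_nonneg_of_nonneg_of_le_pi (by positivity)
    rw [div_le_iff₀ (by positivity)]
    nlinarith [pi_pos, show (1:ℝ) ≤ (N:ℝ) by exact_mod_cast (by omega : 1 ≤ N)]
  have hsinlb : π/(2*(N:ℝ)) ≤ (π/2) * s2N := by
    have hπ : (0:ℝ) < π := pi_pos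
    have hle : π/(2*(N:ℝ)) ≤ π/2 := by
      rw [div_le_div_iff₀ (by positivity) (by norm_num : (0:ℝ) < 2)]
      nlinarith [show (1:ℝ) ≤ (N:ℝ) by exact_mod_cast (by omega : 1 ≤ N)]
    have h1 := Real.mul_le_sin (x := π/(2*(N:ℝ))) (by positivity) hle
    have h2 : 2/π * (π/(2*(N:ℝ))) = 1/(N:ℝ) := by field_simp
    rw [h2] at h1
    calc π/(2*(N:ℝ)) = (π/2) * (1/(N:ℝ)) := by ring
      _ ≤ (π/2)*s2N := by rw [hs2N]; nlinarith
  -- numerical constants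
  have hs3 : (1.7:ℝ) ≤ Real.sqrt 3 := by
    rw [show (1.7:ℝ) = Real.sqrt (1.7^2) from (Real.sqrt_sq (by norm_num)).symm]
    apply Real.sqrt_le_sqrt
    norm_num
  have hs2 : Real.sqrt 2 ≤ 1.5 := by
    rw [show (1.5:ℝ) = Real.sqrt (1.5^2) from (Real.sqrt_sq (by norm_num)).symm]
    apply Real.sqrt_le_sqrt
    norm_num
  have hs2' : (0:ℝ) ≤ Real.sqrt 2 := Real.sqrt_nonneg 2
  have hπ315 : π < 3.15 := pi_lt_d2
  have hSαle : Sα ≤ 2.36 * D := by nlinarith [hSαD, hs3, hSα0]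
  -- key pointwise estimate
  have hkey : ∀ θ : ℝ, |hF X θ - hF X0 θ| ≤ (6 + 2*Real.sqrt 2) * s2N * D := by
    intro θ
    set k : ℤ := ⌊θ/π⌋ with hk
    set θ' : ℝ := θ - k*π with hθ'
    have hper1 : hF X θ' = hF X θ := by
      have hp : Function.Periodic (hF X) π := fun y => hF_add_pi hsym y
      exact hp.sub_int_mul_eq k
    have hper2 : hF X0 θ' = hF X0 θ := by
      have hp : Function.Periodic (hF X0) π := fun y => hF_add_pi hX0sym y
      exact hp.sub_int_mul_eq k
    have hπ : (0:ℝ) < π := pi_pos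
    have hθ'0 : 0 ≤ θ' := by
      rw [hθ', sub_nonneg]
      exact (le_div_iff₀ hπ).mp (Int.floor_le _)
    have hθ'π : θ' < π := by
      rw [hθ']
      have h1 := Int.lt_floor_add_one (θ/π)
      have h2 := (div_lt_iff₀ hπ).mp h1
      linarith
    set x : ℝ := θ' * N / π with hx
    have hx0 : 0 ≤ x := by
      rw [hx]
      apply div_nonneg (mul_nonneg hθ'0 (by positivity)) hπ.le
    have hxN : x < N := by
      rw [hx, div_lt_iff₀ hπ]
      nlinarith
    set m : ℤ := round x with hm
    have hm' : m = ⌊x + 1/2⌋ := round_eq x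
    have hm0 : 0 ≤ m := by
      rw [hm']
      exact Int.floor_nonneg.mpr (by linarith)
    have hmN : m ≤ (N:ℤ) := by
      have h2 : (⌊x + 1/2⌋ : ℤ) < (N:ℤ) + 1 := by
        rw [Int.floor_lt]
        push_cast
        linarith
      omega
    set mn : ℕ := m.toNat with hmn
    have hmncast : ((mn:ℕ):ℝ) = (m:ℝ) := by
      rw [hmn]
      exact_mod_cast Int.toNat_of_nonneg hm0
    have hmnN : mn ≤ N := by omega
    set φ := (mn:ℝ) * π / N with hφ
    have hclose : |θ' - φ| ≤ π/(2*(N:ℝ)) := by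
      have h1 : |x - (m:ℝ)| ≤ 1/2 := abs_sub_round x
      have h2 : θ' - φ = (x - (m:ℝ)) * (π / N) := by
        rw [hφ, hmncast, hx]
        field_simp
      rw [h2, abs_mul, abs_of_nonneg (by positivity : (0:ℝ) ≤ π/(N:ℝ))]
      calc |x - (m:ℝ)| * (π/(N:ℝ)) ≤ (1/2) * (π/(N:ℝ)) := by
            nlinarith [show (0:ℝ) ≤ π/(N:ℝ) by positivity]
        _ = π/(2*(N:ℝ)) := by ring
    have heq : hF X φ = hF X0 φ := by
      have h1 := hgrid mn hmnN
      rw [feret_symm hsym, feret_symm hX0sym] at h1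
      rw [hφ]
      linarith
    have e1 := hlip X (D/2) hne hXsub θ' φ
    have e2 := hlip X0 (Sα/2) hX0ne hX0sub θ' φ
    have habs : |hF X θ - hF X0 θ| ≤ (D/2 + Sα/2) * (Real.sqrt 2 * |θ' - φ|) := by
      rw [← hper1, ← hper2]
      calc |hF X θ' - hF X0 θ'|
          ≤ |hF X θ' - hF X φ| + |hF X φ - hF X0 θ'| := abs_sub_le _ _ _
        _ = |hF X θ' - hF X φ| + |hF X0 θ' - hF X0 φ| := by
            congr 1
            rw [heq, abs_sub_comm]
        _ ≤ (D/2) * (Real.sqrt 2 * |θ'-φ|) + (Sα/2) * (Real.sqrt 2 * |θ'-φ|) :=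
            add_le_add e1 e2
        _ = (D/2 + Sα/2) * (Real.sqrt 2 * |θ' - φ|) := by ring
    have hB0 : (0:ℝ) ≤ D/2 + Sα/2 := by linarith
    have hsp : Real.sqrt 2 * π ≤ 4.725 := by nlinarith
    have hc : (D/2 + Sα/2) * (Real.sqrt 2 * (π/2)) ≤ (6 + 2*Real.sqrt 2) * D := by
      nlinarith [mul_nonneg hD0 hs2', mul_nonneg hSα0 hs2']
    calc |hF X θ - hF X0 θ| ≤ (D/2 + Sα/2) * (Real.sqrt 2 * |θ' - φ|) := habs
      _ ≤ (D/2 + Sα/2) * (Real.sqrt 2 * ((π/2) * s2N)) := by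
          apply mul_le_mul_of_nonneg_left _ hB0
          apply mul_le_mul_of_nonneg_left _ hs2'
          exact hclose.trans hsinlb
      _ = ((D/2 + Sα/2) * (Real.sqrt 2 * (π/2))) * s2N := by ring
      _ ≤ ((6 + 2*Real.sqrt 2) * D) * s2N := mul_le_mul_of_nonneg_right hc hs2N0
      _ = (6 + 2*Real.sqrt 2) * s2N * D := by ring
  -- conclusion
  have hr0 : (0:ℝ) ≤ (6 + 2*Real.sqrt 2) * s2N * D := by
    apply mul_nonneg (mul_nonneg (by nlinarith) hs2N0) hD0
  apply Metric.hausdorffDist_le_of_infDist hr0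
  · intro p hp
    apply infDist_le_of_fS hX0comp hX0conv hX0ne hr0
    intro u hu
    obtain ⟨θ, rfl⟩ := exists_dir u hu
    have h1 : ⟪dir θ, p⟫ ≤ hF X θ := le_fS hXR hp (dir θ)
    have h2 := hkey θ
    have h3 : hF X θ - hF X0 θ ≤ (6 + 2*Real.sqrt 2) * s2N * D := (le_abs_self _).trans h2
    have h4 : fS X0 (dir θ) = hF X0 θ := rfl
    rw [h4]
    linarith
  · intro p hp
    apply infDist_le_of_fS hcomp hconv hne hr0
    intro u hu
    obtain ⟨θ, rfl⟩ := exists_dir u hu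
    have h1 : ⟪dir θ, p⟫ ≤ hF X0 θ := le_fS hX0sub hp (dir θ)
    have h2 := hkey θ
    rw [abs_sub_comm] at h2
    have h3 : hF X0 θ - hF X θ ≤ (6 + 2*Real.sqrt 2) * s2N * D := (le_abs_self _).trans h2
    have h4 : fS X (dir θ) = hF X θ := rfl
    rw [h4]
    linarith
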